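/- Let D be a division ring, let m, n ≥ 2 be integers, let M be a maximal set in D^{m×n}, and let A ∈ D^{m×n}. Then A ∈ M if and only if there exist three noncollinear points B₁, B₂, B₃ of M (noncollinear in the affine geometry AG(M)) such that A is adjacent to each of B₁, B₂, B₃. -/
import Mathlib


open Matrix Function

/-- The rank of a matrix over a division ring: the dimension of its left row space. -/
noncomputable def rk {D : Type*} [DivisionRing D] {m n : ℕ}
    (A : Matrix (Fin m) (Fin n) D) : ℕ :=
  Module.finrank D (Submodule.span D (Set.range fun i => A i))

/-- A nonempty set of matrices, any two distinct members of which are adjacent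
(`rk (A - B) = 1`). -/
def IsAdjSet {D : Type*} [DivisionRing D] {m n : ℕ}
    (S : Set (Matrix (Fin m) (Fin n) D)) : Prop :=
  S.Nonempty ∧ ∀ A ∈ S, ∀ B ∈ S, A ≠ B → rk (A - B) = 1

/-- A maximal set: an adjacent set which is maximal under inclusion. -/
def IsMaxSet {D : Type*} [DivisionRing D] {m n : ℕ}
    (S : Set (Matrix (Fin m) (Fin n) D)) : Prop :=
  IsAdjSet S ∧ ∀ T : Set (Matrix (Fin m) (Fin n) D), IsAdjSet T → S ⊆ T → T = S

/-- `M₁`: matrices whose rows other than the first are zero. -/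
def M1set (D : Type*) [DivisionRing D] (m n : ℕ) : Set (Matrix (Fin m) (Fin n) D) :=
  {X | ∀ (i : Fin m) (j : Fin n), (i : ℕ) ≠ 0 → X i j = 0}

/-- `N₁`: matrices whose columns other than the first are zero. -/
def N1set (D : Type*) [DivisionRing D] (m n : ℕ) : Set (Matrix (Fin m) (Fin n) D) :=
  {X | ∀ (i : Fin m) (j : Fin n), (j : ℕ) ≠ 0 → X i j = 0}

/-- A maximal set of type one: `P·M₁ + A` with `P` invertible. -/
def IsTypeOne {D : Type*} [DivisionRing D] {m n : ℕ}
    (S : Set (Matrix (Fin m) (Fin n) D)) : Prop :=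
  ∃ (P : Matrix (Fin m) (Fin m) D) (A : Matrix (Fin m) (Fin n) D),
    IsUnit P ∧ S = (fun X => P * X + A) '' M1set D m n

/-- A maximal set of type two: `N₁·Q + A` with `Q` invertible. -/
def IsTypeTwo {D : Type*} [DivisionRing D] {m n : ℕ}
    (S : Set (Matrix (Fin m) (Fin n) D)) : Prop :=
  ∃ (Q : Matrix (Fin n) (Fin n) D) (A : Matrix (Fin m) (Fin n) D),
    IsUnit Q ∧ S = (fun X => X * Q + A) '' N1set D m n

/-- Two maximal sets of different types. -/
def DiffTypes {D : Type*} [DivisionRing D] {m n : ℕ}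
    (M N : Set (Matrix (Fin m) (Fin n) D)) : Prop :=
  (IsTypeOne M ∧ IsTypeTwo N) ∨ (IsTypeTwo M ∧ IsTypeOne N)

/-- The unit ball `B_A = D^{m×n}_{≤1} + A`. -/
def uball {D : Type*} [DivisionRing D] {m n : ℕ}
    (A : Matrix (Fin m) (Fin n) D) : Set (Matrix (Fin m) (Fin n) D) :=
  {X | rk (X - A) ≤ 1}

/-- A graph homomorphism: adjacency-preserving map. -/
def IsGraphHom {D D' : Type*} [DivisionRing D] [DivisionRing D'] {m n m' n' : ℕ}
    (φ : Matrix (Fin m) (Fin n) D → Matrix (Fin m') (Fin n') D') : Prop :=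
  ∀ A B, rk (A - B) = 1 → rk (φ A - φ B) = 1

/-- A degenerate graph homomorphism. -/
def Degenerate {D D' : Type*} [DivisionRing D] [DivisionRing D'] {m n m' n' : ℕ}
    (φ : Matrix (Fin m) (Fin n) D → Matrix (Fin m') (Fin n') D') : Prop :=
  ∃ (A : Matrix (Fin m) (Fin n) D) (M N : Set (Matrix (Fin m') (Fin n') D')),
    rk A ≤ 1 ∧ DiffTypes M N ∧ φ '' uball A ⊆ M ∪ N ∧ φ A ∈ M ∩ N

/-- A (vertex) colouring: the image is an adjacent set. -/
def IsColouring {D D' : Type*} [DivisionRing D] [DivisionRing D'] {m n m' n' : ℕ}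
    (φ : Matrix (Fin m) (Fin n) D → Matrix (Fin m') (Fin n') D') : Prop :=
  IsAdjSet (Set.range φ)

/-- A nonzero ring homomorphism. -/
def IsRingHomNZ {D D' : Type*} [DivisionRing D] [DivisionRing D'] (τ : D → D') : Prop :=
  (∀ x y, τ (x + y) = τ x + τ y) ∧ (∀ x y, τ (x * y) = τ x * τ y) ∧ τ ≠ 0

/-- A nonzero ring anti-homomorphism. -/
def IsAntiRingHomNZ {D D' : Type*} [DivisionRing D] [DivisionRing D'] (σ : D → D') : Prop :=
  (∀ x y, σ (x + y) = σ x + σ y) ∧ (∀ x y, σ (x * y) = σ y * σ x) ∧ σ ≠ 0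

/-- The `m × n` matrix with the matrix `Y` in the upper-left corner and zeros elsewhere. -/
def corner {D : Type*} [Zero D] {k l m n : ℕ} (Y : Matrix (Fin k) (Fin l) D) :
    Matrix (Fin m) (Fin n) D :=
  Matrix.of fun i j =>
    if hi : (i : ℕ) < k then if hj : (j : ℕ) < l then Y ⟨i, hi⟩ ⟨j, hj⟩ else 0 else 0

/-- A line of the affine geometry `AG(M)` of a maximal set `M`: a nonempty intersection
`M ∩ N` with `N` a maximal set of the other type. -/
def IsLine {D : Type*} [DivisionRing D] {m n : ℕ}
    (M ℓ : Set (Matrix (Fin m) (Fin n) D)) : Prop :=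
  ∃ N : Set (Matrix (Fin m) (Fin n) D), DiffTypes M N ∧ (M ∩ N).Nonempty ∧ ℓ = M ∩ N

/-- Condition (I). -/
def CondI {D D' : Type*} [DivisionRing D] [DivisionRing D'] {m n m' n' : ℕ}
    (φ : Matrix (Fin m) (Fin n) D → Matrix (Fin m') (Fin n') D') : Prop :=
  ∀ M N : Set (Matrix (Fin m) (Fin n) D), DiffTypes M N → (0 : Matrix (Fin m) (Fin n) D) ∈ M ∩ N →
    ∃ M' N' : Set (Matrix (Fin m') (Fin n') D'),
      DiffTypes M' N' ∧ φ '' M ⊆ M' ∧ φ '' N ⊆ N'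

/-- Condition (i) of the additive homomorphism theorem: `φ(X) = P X^τ Q`. -/
def Cond1 {D D' : Type*} [DivisionRing D] [DivisionRing D'] {m n m' n' : ℕ}
    (φ : Matrix (Fin m) (Fin n) D → Matrix (Fin m') (Fin n') D') : Prop :=
  ∃ (P : Matrix (Fin m') (Fin m) D') (Q : Matrix (Fin n) (Fin n') D') (τ : D → D'),
    2 ≤ rk P ∧ 2 ≤ rk Q ∧ IsRingHomNZ τ ∧ ∀ X, φ X = P * X.map τ * Q

/-- Condition (ii) of the additive homomorphism theorem: `φ(X) = P (ᵗX^σ) Q`. -/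
def Cond2 {D D' : Type*} [DivisionRing D] [DivisionRing D'] {m n m' n' : ℕ}
    (φ : Matrix (Fin m) (Fin n) D → Matrix (Fin m') (Fin n') D') : Prop :=
  ∃ (P : Matrix (Fin m') (Fin n) D') (Q : Matrix (Fin m) (Fin n') D') (σ : D → D'),
    2 ≤ rk P ∧ 2 ≤ rk Q ∧ IsAntiRingHomNZ σ ∧ ∀ X, φ X = P * (X.map σ)ᵀ * Q

namespace St14
variable {D : Type*} [DivisionRing D] {m n : ℕ}

lemma rk_zero : rk (0 : Matrix (Fin m) (Fin n) D) = 0 := by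
  unfold rk
  have h : Submodule.span D (Set.range fun i => (0 : Matrix (Fin m) (Fin n) D) i) = ⊥ := by
    apply le_bot_iff.1
    rw [Submodule.span_le]
    rintro x ⟨i, rfl⟩
    exact Submodule.mem_bot D |>.2 rfl
  rw [h]; simp

lemma rk_span_eq {A : Matrix (Fin m) (Fin n) D} {s : Set (Fin n → D)}
    (h : Submodule.span D (Set.range fun i => A i) = Submodule.span D s) :
    rk A = Module.finrank D (Submodule.span D s) := by
  unfold rk; rw [h]

lemma vecMulVec_apply' (p : Fin m → D) (y : Fin n → D) (i j) :
    vecMulVec p y i j = p i * y j := rfl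

lemma rk_vecMulVec {p : Fin m → D} {y : Fin n → D} (hp : p ≠ 0) (hy : y ≠ 0) :
    rk (vecMulVec p y) = 1 := by
  obtain ⟨i₀, hi₀⟩ : ∃ i, p i ≠ 0 := by
    by_contra h; push_neg at h; exact hp (funext h)
  have hspan : Submodule.span D (Set.range fun i => (vecMulVec p y) i)
      = Submodule.span D {y} := by
    apply le_antisymm
    · rw [Submodule.span_le]
      rintro x ⟨i, rfl⟩
      have h1 : (vecMulVec p y) i = p i • y := by
        funext j; simp [vecMulVec_apply', Pi.smul_apply, smul_eq_mul]
      show (vecMulVec p y) i ∈ _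
      rw [h1]
      exact Submodule.smul_mem _ _ (Submodule.mem_span_singleton_self y)
    · rw [Submodule.span_le, Set.singleton_subset_iff]
      have h2 : y = (p i₀)⁻¹ • (vecMulVec p y) i₀ := by
        funext j; simp [vecMulVec_apply', smul_eq_mul, ← mul_assoc, inv_mul_cancel₀ hi₀]
      have hmem : (vecMulVec p y) i₀ ∈ Submodule.span D (Set.range fun i => (vecMulVec p y) i) :=
        Submodule.subset_span ⟨i₀, rfl⟩
      have h3 := Submodule.smul_mem _ ((p i₀)⁻¹) hmem
      rwa [← h2] at h3
  rw [rk, hspan]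
  exact finrank_span_singleton hy

lemma rk_eq_one_decomp {Z : Matrix (Fin m) (Fin n) D} (h : rk Z = 1) :
    ∃ (p : Fin m → D) (y : Fin n → D), p ≠ 0 ∧ y ≠ 0 ∧ Z = vecMulVec p y := by
  classical
  set W := Submodule.span D (Set.range fun i => Z i) with hW
  have hfin : Module.finrank D W = 1 := h
  have hbot : W ≠ ⊥ := by
    intro hb; rw [hb] at hfin; simp at hfin
  obtain ⟨y, hyW, hy⟩ := Submodule.exists_mem_ne_zero_of_ne_bot hbot
  have hle : Submodule.span D {y} ≤ W := by
    rw [Submodule.span_le, Set.singleton_subset_iff]; exact hyW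
  have heq : Submodule.span D {y} = W := by
    apply Submodule.eq_of_le_of_finrank_le hle
    rw [hfin, finrank_span_singleton hy]
  have hrow : ∀ i, ∃ c : D, Z i = c • y := by
    intro i
    have : Z i ∈ W := Submodule.subset_span ⟨i, rfl⟩
    rw [← heq, Submodule.mem_span_singleton] at this
    obtain ⟨c, hc⟩ := this; exact ⟨c, hc.symm⟩
  choose p hp using hrow
  refine ⟨p, y, ?_, hy, ?_⟩
  · intro hp0
    have hZ0 : Z = 0 := by
      funext i j
      have := congrFun (hp i) j
      rw [congrFun hp0 i] at this
      simpa using this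
    rw [hZ0, rk_zero] at h; exact one_ne_zero h.symm
  · funext i j
    have := congrFun (hp i) j
    simpa [vecMulVec_apply'] using this

lemma rk_sub_comm (A B : Matrix (Fin m) (Fin n) D) : rk (A - B) = rk (B - A) := by
  have key : ∀ (X Y : Matrix (Fin m) (Fin n) D),
      Submodule.span D (Set.range fun i => (X - Y) i) ≤
      Submodule.span D (Set.range fun i => (Y - X) i) := by
    intro X Y
    rw [Submodule.span_le]
    rintro x ⟨i, rfl⟩
    have h1 : (X - Y) i = (-1 : D) • (Y - X) i := by
      funext j; simp
    show (X - Y) i ∈ _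
    rw [h1]
    exact Submodule.smul_mem _ _ (Submodule.subset_span ⟨i, rfl⟩)
  unfold rk
  rw [le_antisymm (key A B) (key B A)]

def RDep {D : Type*} [DivisionRing D] {m : ℕ} (p p' : Fin m → D) : Prop :=
  ∃ a b : D, ¬(a = 0 ∧ b = 0) ∧ ∀ i, p i * a + p' i * b = 0

def LDep {D : Type*} [DivisionRing D] {n : ℕ} (y y' : Fin n → D) : Prop :=
  ∃ a b : D, ¬(a = 0 ∧ b = 0) ∧ ∀ j, a * y j + b * y' j = 0


variable {D : Type*} [DivisionRing D] {m n : ℕ}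

lemma rdep_resolve {p p' : Fin m → D} (h : RDep p p') (hp : p ≠ 0) :
    ∃ c : D, ∀ i, p' i = p i * c := by
  obtain ⟨a, b, hab, hcomb⟩ := h
  by_cases hb : b = 0
  · subst hb
    have ha : a ≠ 0 := fun h0 => hab ⟨h0, rfl⟩
    exfalso
    apply hp
    funext i
    have := hcomb i
    rw [mul_zero, add_zero] at this
    have : p i * a * a⁻¹ = 0 * a⁻¹ := by rw [this]
    rwa [mul_assoc, mul_inv_cancel₀ ha, mul_one, zero_mul] at this
  · refine ⟨-a * b⁻¹, fun i => ?_⟩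
    have := hcomb i
    have h2 : p' i * b = -(p i * a) := by linear_combination (norm := noncomm_ring) this
    have h3 : p' i * b * b⁻¹ = -(p i * a) * b⁻¹ := by rw [h2]
    rw [mul_assoc, mul_inv_cancel₀ hb, mul_one] at h3
    rw [h3]; noncomm_ring

lemma ldep_resolve {y y' : Fin n → D} (h : LDep y y') (hy : y ≠ 0) :
    ∃ c : D, ∀ j, y' j = c * y j := by
  obtain ⟨a, b, hab, hcomb⟩ := h
  by_cases hb : b = 0
  · subst hb
    have ha : a ≠ 0 := fun h0 => hab ⟨h0, rfl⟩
    exfalso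
    apply hy
    funext j
    have := hcomb j
    rw [zero_mul, add_zero] at this
    have : a⁻¹ * (a * y j) = a⁻¹ * 0 := by rw [this]
    rwa [← mul_assoc, inv_mul_cancel₀ ha, one_mul, mul_zero] at this
  · refine ⟨-(b⁻¹ * a), fun j => ?_⟩
    have := hcomb j
    have h2 : b * y' j = -(a * y j) := by linear_combination (norm := noncomm_ring) this
    have h3 : b⁻¹ * (b * y' j) = b⁻¹ * -(a * y j) := by rw [h2]
    rw [← mul_assoc, inv_mul_cancel₀ hb, one_mul] at h3
    rw [h3]; noncomm_ring

/-- Main independence lemma: a difference of two outer products of rank ≤ 1 forces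
dependence on one side. -/
lemma main_dep {p p' : Fin m → D} {y y' : Fin n → D}
    (h : rk (vecMulVec p y - vecMulVec p' y') ≤ 1) : RDep p p' ∨ LDep y y' := by
  by_contra hcon
  push_neg at hcon
  obtain ⟨hR, hL⟩ := hcon
  -- From ¬RDep : p, p' right-independent, in particular p ≠ 0.
  have hRind : ∀ a b : D, (∀ i, p i * a + p' i * b = 0) → a = 0 ∧ b = 0 := by
    intro a b hab
    by_contra hne
    exact hR ⟨a, b, hne, hab⟩
  have hLind : ∀ a b : D, (∀ j, a * y j + b * y' j = 0) → a = 0 ∧ b = 0 := by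
    intro a b hab
    by_contra hne
    exact hL ⟨a, b, hne, hab⟩
  have hp : p ≠ 0 := by
    intro h0
    have := hRind 1 0 (fun i => by rw [congrFun h0 i]; simp)
    exact one_ne_zero this.1
  obtain ⟨i₀, hi₀⟩ : ∃ i, p i ≠ 0 := by
    by_contra hh; push_neg at hh; exact hp (funext hh)
  set Z := vecMulVec p y - vecMulVec p' y' with hZ
  have hrow : ∀ i, Z i = p i • y - p' i • y' := by
    intro i; funext j
    simp [hZ, vecMulVec, Matrix.sub_apply, smul_eq_mul]
  -- case analysis on whether p' is a right multiple of p
  set β : D := (p i₀)⁻¹ * p' i₀ with hβ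
  by_cases hcase : ∀ i, p' i = p i * β
  · -- then RDep
    exfalso
    have hx := (hRind β (-1) (fun i => by rw [hcase i]; noncomm_ring)).2
    norm_num at hx
  · push_neg at hcase
    obtain ⟨i₁, hi₁⟩ := hcase
    set γ : D := p' i₁ - p i₁ * β with hγ
    have hγ0 : γ ≠ 0 := sub_ne_zero.2 hi₁
    set W := Submodule.span D (Set.range fun i => Z i) with hW
    have hZmem : ∀ i, Z i ∈ W := fun i => Submodule.subset_span ⟨i, rfl⟩
    have hy'W : y' ∈ W := by
      have hw : Z i₁ - (p i₁ * (p i₀)⁻¹) • Z i₀ = (-γ) • y' := by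
        funext j
        rw [hrow, hrow]
        simp only [Pi.sub_apply, Pi.smul_apply, smul_eq_mul]
        have e1 : p i₁ * (p i₀)⁻¹ * (p i₀ * y j) = p i₁ * y j := by
          rw [mul_assoc, ← mul_assoc (p i₀)⁻¹, inv_mul_cancel₀ hi₀, one_mul]
        have e2 : p i₁ * (p i₀)⁻¹ * (p' i₀ * y' j) = p i₁ * β * y' j := by
          simp [hβ, mul_assoc]
        rw [mul_sub, e1, e2, hγ]
        noncomm_ring
      have hm : Z i₁ - (p i₁ * (p i₀)⁻¹) • Z i₀ ∈ W :=
        Submodule.sub_mem _ (hZmem i₁) (Submodule.smul_mem _ _ (hZmem i₀))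
      rw [hw] at hm
      have := Submodule.smul_mem _ (-γ)⁻¹ hm
      rwa [smul_smul, inv_mul_cancel₀ (neg_ne_zero.2 hγ0), one_smul] at this
    have hyW : y ∈ W := by
      have hw : y = (p i₀)⁻¹ • (Z i₀ + p' i₀ • y') := by
        funext j
        rw [hrow]
        simp only [Pi.add_apply, Pi.smul_apply, Pi.sub_apply, smul_eq_mul]
        rw [sub_add_cancel, ← mul_assoc, inv_mul_cancel₀ hi₀, one_mul]
      rw [hw]
      exact Submodule.smul_mem _ _ (Submodule.add_mem _ (hZmem i₀) (Submodule.smul_mem _ _ hy'W))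
    -- y, y' linearly independent
    have hind : LinearIndependent D ![y, y'] := by
      rw [LinearIndependent.pair_iff]
      intro s t hst
      apply hLind s t
      intro j
      have := congrFun hst j
      simpa [smul_eq_mul] using this
    -- span of rows = span {y, y'}
    have hle2 : Submodule.span D (Set.range ![y, y']) ≤ W := by
      rw [Submodule.span_le]
      rintro x ⟨i, rfl⟩
      fin_cases i
      · exact hyW
      · exact hy'W
    have h2le : 2 ≤ Module.finrank D W := by
      have hcard := finrank_span_eq_card hind
      simp only [Fintype.card_fin] at hcard
      calc 2 = Module.finrank D (Submodule.span D (Set.range ![y, y'])) := hcard.symm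
        _ ≤ Module.finrank D W := Submodule.finrank_mono hle2
    rw [rk, ← hW] at h
    omega



section Frag2
variable {D : Type*} [DivisionRing D] {m n : ℕ}

lemma vv_sub_left (p : Fin m → D) (y y' : Fin n → D) :
    vecMulVec p y - vecMulVec p y' = vecMulVec p (y - y') := by
  funext i j
  simp [vecMulVec, mul_sub]

lemma vv_sub_right (x x' : Fin m → D) (q : Fin n → D) :
    vecMulVec x q - vecMulVec x' q = vecMulVec (x - x') q := by
  funext i j
  simp [vecMulVec, sub_mul]

lemma vv_zero_right (p : Fin m → D) : vecMulVec p (0 : Fin n → D) = 0 := by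
  funext i j; simp [vecMulVec]

lemma vv_smul_assoc (p : Fin m → D) (c : D) (y : Fin n → D) :
    vecMulVec (fun i => p i * c) y = vecMulVec p (fun j => c * y j) := by
  funext i j; simp [vecMulVec, mul_assoc]

lemma vv_inj_right {p : Fin m → D} (hp : p ≠ 0) {y y' : Fin n → D}
    (h : vecMulVec p y = vecMulVec p y') : y = y' := by
  obtain ⟨i₀, hi₀⟩ : ∃ i, p i ≠ 0 := by
    by_contra hh; push_neg at hh; exact hp (funext hh)
  funext j
  have := congrFun (congrFun h i₀) j
  simp only [vecMulVec, Matrix.of_apply] at this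
  have h2 : (p i₀)⁻¹ * (p i₀ * y j) = (p i₀)⁻¹ * (p i₀ * y' j) := by rw [this]
  rwa [← mul_assoc, ← mul_assoc, inv_mul_cancel₀ hi₀, one_mul, one_mul] at h2

lemma vv_inj_left {q : Fin n → D} (hq : q ≠ 0) {x x' : Fin m → D}
    (h : vecMulVec x q = vecMulVec x' q) : x = x' := by
  obtain ⟨j₀, hj₀⟩ : ∃ j, q j ≠ 0 := by
    by_contra hh; push_neg at hh; exact hq (funext hh)
  funext i
  have := congrFun (congrFun h i) j₀
  simp only [vecMulVec, Matrix.of_apply] at this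
  have h2 : x i * q j₀ * (q j₀)⁻¹ = x' i * q j₀ * (q j₀)⁻¹ := by rw [this]
  rwa [mul_assoc, mul_assoc, mul_inv_cancel₀ hj₀, mul_one, mul_one] at h2

/-- The set `{p ⊗ y + C : y}` (a type-one maximal set in direction form). -/
def T1 (p : Fin m → D) (C : Matrix (Fin m) (Fin n) D) : Set (Matrix (Fin m) (Fin n) D) :=
  {Z | ∃ y : Fin n → D, Z = vecMulVec p y + C}

/-- The set `{x ⊗ q + C : x}` (a type-two maximal set in direction form). -/
def T2 (q : Fin n → D) (C : Matrix (Fin m) (Fin n) D) : Set (Matrix (Fin m) (Fin n) D) :=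
  {Z | ∃ x : Fin m → D, Z = vecMulVec x q + C}

lemma adjSet_T1 {p : Fin m → D} (hp : p ≠ 0) (C : Matrix (Fin m) (Fin n) D) :
    IsAdjSet (T1 p C) := by
  constructor
  · exact ⟨C, 0, by simp [vv_zero_right]⟩
  · rintro A ⟨y, rfl⟩ B ⟨y', rfl⟩ hne
    have hyy : y ≠ y' := by
      rintro rfl; exact hne rfl
    have : vecMulVec p y + C - (vecMulVec p y' + C) = vecMulVec p (y - y') := by
      rw [← vv_sub_left]; abel
    rw [this]
    exact rk_vecMulVec hp (sub_ne_zero.2 hyy)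

lemma adjSet_T2 {q : Fin n → D} (hq : q ≠ 0) (C : Matrix (Fin m) (Fin n) D) :
    IsAdjSet (T2 q C) := by
  constructor
  · exact ⟨C, 0, by simp [vecMulVec]; funext i j; simp [vecMulVec]⟩
  · rintro A ⟨x, rfl⟩ B ⟨x', rfl⟩ hne
    have hxx : x ≠ x' := by rintro rfl; exact hne rfl
    have : vecMulVec x q + C - (vecMulVec x' q + C) = vecMulVec (x - x') q := by
      rw [← vv_sub_right]; abel
    rw [this]
    exact rk_vecMulVec (sub_ne_zero.2 hxx) hq

end Frag2

section Frag3
variable {D : Type*} [DivisionRing D] {m n : ℕ}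

/-- The permutation matrix of the transposition `(0 k)`. -/
def swapM (k : Fin m) [NeZero m] : Matrix (Fin m) (Fin m) D :=
  Matrix.of fun a b => if (Equiv.swap (0 : Fin m) k) a = b then 1 else 0

lemma swapM_mul_self (k : Fin m) [NeZero m] :
    (swapM k : Matrix (Fin m) (Fin m) D) * swapM k = 1 := by
  funext a b
  rw [Matrix.mul_apply, Finset.sum_eq_single ((Equiv.swap (0 : Fin m) k) a)]
  · simp only [swapM, Matrix.of_apply, if_pos rfl, one_mul]
    rw [Equiv.swap_apply_self]
    simp [Matrix.one_apply]
  · intro c _ hc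
    simp [swapM, Ne.symm hc]
  · intro h; exact absurd (Finset.mem_univ _) h

lemma mulvv_single_right (k : Fin m) (u v : Fin m → D) [NeZero m] :
    (vecMulVec u (Pi.single k 1) : Matrix (Fin m) (Fin m) D) * vecMulVec v (Pi.single k 1)
      = vecMulVec (fun i => u i * v k) (Pi.single k (1 : D)) := by
  funext i j
  rw [Matrix.mul_apply, Finset.sum_eq_single k]
  · simp only [vecMulVec, Matrix.of_apply, Pi.single_eq_same, mul_one]
    noncomm_ring
  · intro c _ hc
    simp [vecMulVec, Pi.single_eq_of_ne hc]
  · intro h; exact absurd (Finset.mem_univ _) h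

lemma mulvv_single_left (k : Fin n) (u v : Fin n → D) [NeZero n] :
    (vecMulVec (Pi.single k 1) u : Matrix (Fin n) (Fin n) D) * vecMulVec (Pi.single k 1) v
      = vecMulVec (Pi.single k (1 : D)) (fun j => u k * v j) := by
  funext i j
  rw [Matrix.mul_apply, Finset.sum_eq_single k]
  · simp only [vecMulVec, Matrix.of_apply, Pi.single_eq_same, one_mul]
    noncomm_ring
  · intro c _ hc
    simp [vecMulVec, Pi.single_eq_of_ne hc]
  · intro h; exact absurd (Finset.mem_univ _) h

lemma one_add_vv_mul (k : Fin m) [NeZero m] {u v : Fin m → D}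
    (h : ∀ i, u i + v i + u i * v k = 0) :
    ((1 : Matrix (Fin m) (Fin m) D) + vecMulVec u (Pi.single k 1))
      * (1 + vecMulVec v (Pi.single k 1)) = 1 := by
  rw [add_mul, mul_add, mul_add, one_mul, mul_one, mulvv_single_right, one_mul]
  have hz : vecMulVec v (Pi.single k 1) + (vecMulVec u (Pi.single k 1)
      + vecMulVec (fun i => u i * v k) (Pi.single k (1:D))) = 0 := by
    funext i j
    simp only [Matrix.add_apply, vecMulVec, Matrix.of_apply, Matrix.zero_apply]
    rw [← add_mul, ← add_mul,
      show v i + (u i + u i * v k) = u i + v i + u i * v k from by abel, h i, zero_mul]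
  rw [add_assoc, hz, add_zero]

lemma one_add_vv_mul' (k : Fin n) [NeZero n] {u v : Fin n → D}
    (h : ∀ j, u j + v j + u k * v j = 0) :
    ((1 : Matrix (Fin n) (Fin n) D) + vecMulVec (Pi.single k 1) u)
      * (1 + vecMulVec (Pi.single k 1) v) = 1 := by
  rw [add_mul, mul_add, mul_add, one_mul, mul_one, mulvv_single_left, one_mul]
  have hz : vecMulVec (Pi.single k 1) v + (vecMulVec (Pi.single k 1) u
      + vecMulVec (Pi.single k (1:D)) (fun j => u k * v j)) = 0 := by
    funext i j
    simp only [Matrix.add_apply, vecMulVec, Matrix.of_apply, Matrix.zero_apply]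
    rw [← mul_add, ← mul_add,
      show v j + (u j + u k * v j) = u j + v j + u k * v j from by abel, h j, mul_zero]
  rw [add_assoc, hz, add_zero]

/-- An invertible matrix with prescribed first column. -/
lemma exists_unit_col [NeZero m] {p : Fin m → D} (hp : p ≠ 0) :
    ∃ P : Matrix (Fin m) (Fin m) D, IsUnit P ∧ ∀ i, P i 0 = p i := by
  classical
  obtain ⟨k, hk⟩ : ∃ k, p k ≠ 0 := by
    by_contra hh; push_neg at hh; exact hp (funext hh)
  set u : Fin m → D := fun i => p i - (Pi.single k 1 : Fin m → D) i with hu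
  set v : Fin m → D := fun i => -(u i * (p k)⁻¹) with hv
  have huk : u k = p k - 1 := by simp [hu]
  have hvk : v k = (p k)⁻¹ - 1 := by
    simp only [hv, huk, sub_mul, mul_inv_cancel₀ hk, one_mul, neg_sub]
  set L : Matrix (Fin m) (Fin m) D := 1 + vecMulVec u (Pi.single k 1) with hL
  set L' : Matrix (Fin m) (Fin m) D := 1 + vecMulVec v (Pi.single k 1) with hL'
  have h1 : L * L' = 1 := by
    apply one_add_vv_mul
    intro i
    rw [hvk]
    simp only [hv]
    noncomm_ring
  have h2 : L' * L = 1 := by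
    apply one_add_vv_mul
    intro i
    rw [huk]
    simp only [hv]
    have e : u i * (p k)⁻¹ * p k = u i := by
      rw [mul_assoc, inv_mul_cancel₀ hk, mul_one]
    rw [neg_mul, mul_sub, mul_one, e]
    abel
  have hLik : ∀ i, L i k = p i := by
    intro i
    simp only [hL, Matrix.add_apply, vecMulVec, Matrix.of_apply, Pi.single_eq_same, mul_one,
      Matrix.one_apply, hu]
    by_cases hik : i = k
    · subst hik; simp
    · simp [hik, Pi.single_eq_of_ne hik]
  refine ⟨L * swapM k, ⟨⟨L * swapM k, swapM k * L', ?_, ?_⟩, rfl⟩, ?_⟩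
  · calc L * swapM k * (swapM k * L') = L * (swapM k * swapM k) * L' := by
          rw [mul_assoc, mul_assoc, mul_assoc]
      _ = L * L' := by rw [swapM_mul_self, mul_one]
      _ = 1 := h1
  · calc swapM k * L' * (L * swapM k) = swapM k * (L' * L) * swapM k := by
          rw [mul_assoc, mul_assoc, mul_assoc]
      _ = swapM k * swapM k := by rw [h2, mul_one]
      _ = 1 := swapM_mul_self k
  · intro i
    rw [Matrix.mul_apply, Finset.sum_eq_single k]
    · have : (swapM k : Matrix (Fin m) (Fin m) D) k 0 = 1 := by
        simp [swapM, Equiv.swap_apply_right]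
      rw [this, mul_one, hLik]
    · intro c _ hc
      have : (swapM k : Matrix (Fin m) (Fin m) D) c 0 = 0 := by
        simp only [swapM, Matrix.of_apply, ite_eq_right_iff]
        intro hsw
        exfalso
        apply hc
        have := congrArg (Equiv.swap (0 : Fin m) k) hsw
        rwa [Equiv.swap_apply_self, Equiv.swap_apply_left] at this
      rw [this, mul_zero]
    · intro h; exact absurd (Finset.mem_univ _) h

/-- An invertible matrix with prescribed first row. -/
lemma exists_unit_row [NeZero n] {q : Fin n → D} (hq : q ≠ 0) :
    ∃ Q : Matrix (Fin n) (Fin n) D, IsUnit Q ∧ ∀ j, Q 0 j = q j := by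
  classical
  obtain ⟨k, hk⟩ : ∃ k, q k ≠ 0 := by
    by_contra hh; push_neg at hh; exact hq (funext hh)
  set u : Fin n → D := fun j => q j - (Pi.single k 1 : Fin n → D) j with hu
  set v : Fin n → D := fun j => -((q k)⁻¹ * u j) with hv
  have huk : u k = q k - 1 := by simp [hu]
  have hvk : v k = (q k)⁻¹ - 1 := by
    simp only [hv, huk, mul_sub, inv_mul_cancel₀ hk, mul_one, neg_sub]
  set L : Matrix (Fin n) (Fin n) D := 1 + vecMulVec (Pi.single k 1) u with hL
  set L' : Matrix (Fin n) (Fin n) D := 1 + vecMulVec (Pi.single k 1) v with hL'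
  have h1 : L * L' = 1 := by
    apply one_add_vv_mul'
    intro j
    rw [huk]
    simp only [hv]
    have e : q k * ((q k)⁻¹ * u j) = u j := by
      rw [← mul_assoc, mul_inv_cancel₀ hk, one_mul]
    rw [mul_neg, sub_mul, one_mul, e]
    abel
  have h2 : L' * L = 1 := by
    apply one_add_vv_mul'
    intro j
    rw [hvk]
    simp only [hv]
    noncomm_ring
  have hLkj : ∀ j, L k j = q j := by
    intro j
    simp only [hL, Matrix.add_apply, vecMulVec, Matrix.of_apply, Pi.single_eq_same, one_mul,
      Matrix.one_apply, hu]
    by_cases hjk : k = j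
    · subst hjk; simp
    · simp [hjk, Pi.single_eq_of_ne (Ne.symm hjk)]
  refine ⟨swapM k * L, ⟨⟨swapM k * L, L' * swapM k, ?_, ?_⟩, rfl⟩, ?_⟩
  · calc swapM k * L * (L' * swapM k) = swapM k * (L * L') * swapM k := by
          rw [mul_assoc, mul_assoc, mul_assoc]
      _ = swapM k * swapM k := by rw [h1, mul_one]
      _ = 1 := swapM_mul_self k
  · calc L' * swapM k * (swapM k * L) = L' * (swapM k * swapM k) * L := by
          rw [mul_assoc, mul_assoc, mul_assoc]
      _ = L' * L := by rw [swapM_mul_self, mul_one]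
      _ = 1 := h2
  · intro j
    rw [Matrix.mul_apply, Finset.sum_eq_single k]
    · have : (swapM k : Matrix (Fin n) (Fin n) D) 0 k = 1 := by
        simp [swapM, Equiv.swap_apply_left]
      rw [this, one_mul, hLkj]
    · intro c _ hc
      have : (swapM k : Matrix (Fin n) (Fin n) D) 0 c = 0 := by
        simp only [swapM, Matrix.of_apply, ite_eq_right_iff]
        intro hsw
        exact absurd hsw.symm (by rwa [Equiv.swap_apply_left])
      rw [this, zero_mul]
    · intro h; exact absurd (Finset.mem_univ _) h

end Frag3

section Frag4
variable {D : Type*} [DivisionRing D] {m n : ℕ}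

lemma mul_M1 [NeZero m] (P : Matrix (Fin m) (Fin m) D) {X : Matrix (Fin m) (Fin n) D}
    (hX : X ∈ M1set D m n) : P * X = vecMulVec (fun i => P i 0) (X 0) := by
  funext i j
  rw [Matrix.mul_apply, Finset.sum_eq_single 0]
  · rfl
  · intro k _ hk
    have hkv : (k : ℕ) ≠ 0 := by
      intro h0
      exact hk (Fin.ext (by simp [h0]))
    rw [hX k j hkv, mul_zero]
  · intro h; exact absurd (Finset.mem_univ _) h

lemma N1_mul [NeZero n] (Q : Matrix (Fin n) (Fin n) D) {X : Matrix (Fin m) (Fin n) D}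
    (hX : X ∈ N1set D m n) : X * Q = vecMulVec (fun i => X i 0) (Q 0) := by
  funext i j
  rw [Matrix.mul_apply, Finset.sum_eq_single 0]
  · rfl
  · intro k _ hk
    have hkv : (k : ℕ) ≠ 0 := by
      intro h0
      exact hk (Fin.ext (by simp [h0]))
    rw [hX i k hkv, zero_mul]
  · intro h; exact absurd (Finset.mem_univ _) h

lemma unit_col_ne [NeZero m] {P : Matrix (Fin m) (Fin m) D} (h : IsUnit P) :
    (fun i => P i 0) ≠ (0 : Fin m → D) := by
  intro h0
  obtain ⟨B, hB⟩ := h.exists_left_inv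
  have h2 := congrFun (congrFun hB 0) 0
  rw [Matrix.mul_apply, Matrix.one_apply_eq] at h2
  have hz : ∀ k ∈ Finset.univ, B 0 k * P k 0 = 0 := by
    intro k _
    have hk : P k 0 = 0 := congrFun h0 k
    rw [hk, mul_zero]
  rw [Finset.sum_eq_zero hz] at h2
  exact one_ne_zero h2.symm

lemma unit_row_ne [NeZero n] {Q : Matrix (Fin n) (Fin n) D} (h : IsUnit Q) :
    (Q 0) ≠ (0 : Fin n → D) := by
  intro h0
  obtain ⟨B, hB⟩ := h.exists_right_inv
  have h2 := congrFun (congrFun hB 0) 0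
  rw [Matrix.mul_apply, Matrix.one_apply_eq] at h2
  have hz : ∀ k ∈ Finset.univ, Q 0 k * B k 0 = 0 := by
    intro k _
    have hk : Q 0 k = 0 := congrFun h0 k
    rw [hk, zero_mul]
  rw [Finset.sum_eq_zero hz] at h2
  exact one_ne_zero h2.symm

lemma rowEmbed_mem [NeZero m] (y : Fin n → D) :
    (Matrix.of fun (k : Fin m) (j : Fin n) => if k = 0 then y j else 0) ∈ M1set D m n := by
  intro i j hi
  simp only [Matrix.of_apply, ite_eq_right_iff]
  intro h0
  exact absurd (by rw [h0]; simp) hi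

lemma colEmbed_mem [NeZero n] (x : Fin m → D) :
    (Matrix.of fun (i : Fin m) (k : Fin n) => if k = 0 then x i else 0) ∈ N1set D m n := by
  intro i j hj
  simp only [Matrix.of_apply, ite_eq_right_iff]
  intro h0
  exact absurd (by rw [h0]; simp) hj

lemma rowEmbed_zero [NeZero m] (y : Fin n → D) :
    (Matrix.of fun (k : Fin m) (j : Fin n) => if k = 0 then y j else 0) 0 = y := by
  funext j; simp

lemma colEmbed_zero [NeZero n] (x : Fin m → D) :
    (fun i => (Matrix.of fun (i : Fin m) (k : Fin n) => if k = 0 then x i else 0) i 0) = x := by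
  funext i; simp

lemma isTypeOne_iff [NeZero m] {S : Set (Matrix (Fin m) (Fin n) D)} :
    IsTypeOne S ↔ ∃ (p : Fin m → D) (C : Matrix (Fin m) (Fin n) D), p ≠ 0 ∧ S = T1 p C := by
  constructor
  · rintro ⟨P, C, hP, rfl⟩
    refine ⟨fun i => P i 0, C, unit_col_ne hP, ?_⟩
    ext Z
    constructor
    · rintro ⟨X, hX, rfl⟩
      exact ⟨X 0, by show P * X + C = _; rw [mul_M1 P hX]⟩
    · rintro ⟨y, rfl⟩
      refine ⟨Matrix.of fun k j => if k = 0 then y j else 0, rowEmbed_mem y, ?_⟩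
      show P * _ + C = _
      rw [mul_M1 P (rowEmbed_mem y), rowEmbed_zero]
  · rintro ⟨p, C, hp, rfl⟩
    obtain ⟨P, hP, hcol⟩ := exists_unit_col hp
    have hpc : (fun i => P i 0) = p := funext hcol
    refine ⟨P, C, hP, ?_⟩
    ext Z
    constructor
    · rintro ⟨y, rfl⟩
      refine ⟨Matrix.of fun k j => if k = 0 then y j else 0, rowEmbed_mem y, ?_⟩
      show P * _ + C = _
      rw [mul_M1 P (rowEmbed_mem y), rowEmbed_zero, hpc]
    · rintro ⟨X, hX, rfl⟩
      refine ⟨X 0, ?_⟩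
      show P * X + C = _
      rw [mul_M1 P hX, hpc]

lemma isTypeTwo_iff [NeZero n] {S : Set (Matrix (Fin m) (Fin n) D)} :
    IsTypeTwo S ↔ ∃ (q : Fin n → D) (C : Matrix (Fin m) (Fin n) D), q ≠ 0 ∧ S = T2 q C := by
  constructor
  · rintro ⟨Q, C, hQ, rfl⟩
    refine ⟨Q 0, C, unit_row_ne hQ, ?_⟩
    ext Z
    constructor
    · rintro ⟨X, hX, rfl⟩
      exact ⟨fun i => X i 0, by show X * Q + C = _; rw [N1_mul Q hX]⟩
    · rintro ⟨x, rfl⟩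
      refine ⟨Matrix.of fun i k => if k = 0 then x i else 0, colEmbed_mem x, ?_⟩
      show _ * Q + C = _
      rw [N1_mul Q (colEmbed_mem x), colEmbed_zero]
  · rintro ⟨q, C, hq, rfl⟩
    obtain ⟨Q, hQ, hrow⟩ := exists_unit_row hq
    have hqc : Q 0 = q := funext hrow
    refine ⟨Q, C, hQ, ?_⟩
    ext Z
    constructor
    · rintro ⟨x, rfl⟩
      refine ⟨Matrix.of fun i k => if k = 0 then x i else 0, colEmbed_mem x, ?_⟩
      show _ * Q + C = _
      rw [N1_mul Q (colEmbed_mem x), colEmbed_zero, hqc]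
    · rintro ⟨X, hX, rfl⟩
      refine ⟨fun i => X i 0, ?_⟩
      show X * Q + C = _
      rw [N1_mul Q hX, hqc]

end Frag4

section Frag5
variable {D : Type*} [DivisionRing D] {m n : ℕ}

lemma vv_zero_left (y : Fin n → D) : vecMulVec (0 : Fin m → D) y = 0 := by
  funext i j; simp [vecMulVec]

lemma single_ne_zero' [NeZero m] : (Pi.single 0 1 : Fin m → D) ≠ 0 := by
  intro h
  have := congrFun h 0
  rw [Pi.single_eq_same] at this
  exact one_ne_zero this

lemma classify [NeZero m] [NeZero n] {M : Set (Matrix (Fin m) (Fin n) D)} (hM : IsMaxSet M) :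
    (∃ (p : Fin m → D) (C : Matrix (Fin m) (Fin n) D), p ≠ 0 ∧ M = T1 p C) ∨
    (∃ (q : Fin n → D) (C : Matrix (Fin m) (Fin n) D), q ≠ 0 ∧ M = T2 q C) := by
  obtain ⟨⟨A₀, hA₀M⟩, hadj⟩ := hM.1
  have hmax : ∀ (p : Fin m → D) (C), p ≠ 0 → M ⊆ T1 p C → M = T1 p C :=
    fun p C hp hsub => (hM.2 _ (adjSet_T1 hp C) hsub).symm
  have hmax2 : ∀ (q : Fin n → D) (C), q ≠ 0 → M ⊆ T2 q C → M = T2 q C :=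
    fun q C hq hsub => (hM.2 _ (adjSet_T2 hq C) hsub).symm
  by_cases hsingle : ∀ B ∈ M, B = A₀
  · left
    refine ⟨(Pi.single 0 1 : Fin m → D), A₀, single_ne_zero', hmax _ _ single_ne_zero' ?_⟩
    intro B hB
    rw [hsingle B hB]
    exact ⟨(0 : Fin n → D), by rw [vv_zero_right, zero_add]⟩
  · push_neg at hsingle
    obtain ⟨B₀, hB₀M, hB₀⟩ := hsingle
    obtain ⟨p₀, y₀, hp₀, hy₀, hd₀⟩ := rk_eq_one_decomp (hadj B₀ hB₀M A₀ hA₀M hB₀)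
    by_cases hall : ∀ B ∈ M, ∃ y, B - A₀ = vecMulVec p₀ y
    · left
      refine ⟨p₀, A₀, hp₀, hmax _ _ hp₀ ?_⟩
      intro B hB
      obtain ⟨y, hy⟩ := hall B hB
      exact ⟨y, by rw [← hy, sub_add_cancel]⟩
    · push_neg at hall
      obtain ⟨B₁, hB₁M, hB₁⟩ := hall
      have hB₁A : B₁ ≠ A₀ := by
        intro h; subst h
        exact hB₁ 0 (by rw [sub_self, vv_zero_right])
      obtain ⟨p₁, y₁, hp₁, hy₁, hd₁⟩ := rk_eq_one_decomp (hadj B₁ hB₁M A₀ hA₀M hB₁A)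
      have hnp : ¬∃ c : D, ∀ i, p₁ i = p₀ i * c := by
        rintro ⟨c, hc⟩
        apply hB₁ (fun j => c * y₁ j)
        rw [hd₁]
        have : p₁ = fun i => p₀ i * c := funext hc
        rw [this, vv_smul_assoc]
      have hB₁B₀ : B₁ ≠ B₀ := by
        intro h
        apply hB₁ y₀
        rw [h, hd₀]
      have hdiff : B₁ - B₀ = vecMulVec p₁ y₁ - vecMulVec p₀ y₀ := by
        rw [← hd₁, ← hd₀]; abel
      have hrk1 : rk (vecMulVec p₁ y₁ - vecMulVec p₀ y₀) ≤ 1 := by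
        rw [← hdiff, hadj B₁ hB₁M B₀ hB₀M hB₁B₀]
      rcases main_dep hrk1 with hR | hL
      · exfalso
        obtain ⟨c, hc⟩ := rdep_resolve hR hp₁
        have hc0 : c ≠ 0 := by
          intro h0; subst h0
          apply hp₀; funext i; rw [hc i, mul_zero]; rfl
        exact hnp ⟨c⁻¹, fun i => by rw [hc i, mul_assoc, mul_inv_cancel₀ hc0, mul_one]⟩
      · obtain ⟨c, hc⟩ := ldep_resolve hL hy₁
        have hc0 : c ≠ 0 := by
          intro h0; subst h0
          apply hy₀; funext j; rw [hc j, zero_mul]; rfl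
        have hy₁y₀ : ∀ j, y₁ j = c⁻¹ * y₀ j := by
          intro j; rw [hc j, ← mul_assoc, inv_mul_cancel₀ hc0, one_mul]
        right
        refine ⟨y₀, A₀, hy₀, hmax2 _ _ hy₀ ?_⟩
        intro B hBM
        by_cases hBA : B = A₀
        · exact ⟨(0 : Fin m → D), by rw [hBA, vv_zero_left, zero_add]⟩
        obtain ⟨p, y, hp, hy, hd⟩ := rk_eq_one_decomp (hadj B hBM A₀ hA₀M hBA)
        -- we show ∃ x, B - A₀ = vecMulVec x y₀, i.e. y is proportional to y₀
        suffices hsuf : ∃ x, B - A₀ = vecMulVec x y₀ by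
          obtain ⟨x, hx⟩ := hsuf
          exact ⟨x, by rw [← hx, sub_add_cancel]⟩
        by_cases hBB₀ : B = B₀
        · exact ⟨p₀, by rw [hBB₀, hd₀]⟩
        have hdiff0 : rk (vecMulVec p y - vecMulVec p₀ y₀) ≤ 1 := by
          have : B - B₀ = vecMulVec p y - vecMulVec p₀ y₀ := by rw [← hd, ← hd₀]; abel
          rw [← this, hadj B hBM B₀ hB₀M hBB₀]
        rcases main_dep hdiff0 with hR | hL2
        · -- p₀ = p * a
          obtain ⟨a, ha⟩ := rdep_resolve hR hp
          have ha0 : a ≠ 0 := by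
            intro h0; subst h0
            apply hp₀; funext i; rw [ha i, mul_zero]; rfl
          by_cases hBB₁ : B = B₁
          · refine ⟨fun i => p₁ i * c⁻¹, ?_⟩
            rw [hBB₁, hd₁, vv_smul_assoc,
              show y₁ = (fun j => c⁻¹ * y₀ j) from funext hy₁y₀]
          have hdiff1 : rk (vecMulVec p y - vecMulVec p₁ y₁) ≤ 1 := by
            have : B - B₁ = vecMulVec p y - vecMulVec p₁ y₁ := by rw [← hd, ← hd₁]; abel
            rw [← this, hadj B hBM B₁ hB₁M hBB₁]
          rcases main_dep hdiff1 with hR1 | hL1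
          · exfalso
            obtain ⟨b, hb⟩ := rdep_resolve hR1 hp
            apply hnp
            refine ⟨a⁻¹ * b, fun i => ?_⟩
            have hpi : p i = p₀ i * a⁻¹ := by
              rw [ha i, mul_assoc, mul_inv_cancel₀ ha0, mul_one]
            rw [hb i, hpi, mul_assoc]
          · -- y₁ = e • y
            obtain ⟨e, he⟩ := ldep_resolve hL1 hy
            have he0 : e ≠ 0 := by
              intro h0; subst h0
              apply hy₁; funext j; rw [he j, zero_mul]; rfl
            refine ⟨fun i => p i * (e⁻¹ * c⁻¹), ?_⟩
            have hyform : y = fun j => e⁻¹ * c⁻¹ * y₀ j := by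
              funext j
              have h1 : e⁻¹ * y₁ j = y j := by
                rw [he j, ← mul_assoc, inv_mul_cancel₀ he0, one_mul]
              rw [← h1, hy₁y₀ j, ← mul_assoc]
            rw [hd, vv_smul_assoc, hyform]
        · -- y₀ = d • y
          obtain ⟨d, hdd⟩ := ldep_resolve hL2 hy
          have hd0 : d ≠ 0 := by
            intro h0; subst h0
            apply hy₀; funext j; rw [hdd j, zero_mul]; rfl
          refine ⟨fun i => p i * d⁻¹, ?_⟩
          have hyform : y = fun j => d⁻¹ * y₀ j := by
            funext j
            rw [hdd j, ← mul_assoc, inv_mul_cancel₀ hd0, one_mul]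
          rw [hd, vv_smul_assoc, hyform]

end Frag5

section Frag6
variable {D : Type*} [DivisionRing D] {m n : ℕ}

lemma vv_add_left (p : Fin m → D) (y y' : Fin n → D) :
    vecMulVec p y + vecMulVec p y' = vecMulVec p (y + y') := by
  funext i j; simp [vecMulVec, mul_add]

lemma vv_add_right (x x' : Fin m → D) (q : Fin n → D) :
    vecMulVec x q + vecMulVec x' q = vecMulVec (x + x') q := by
  funext i j; simp [vecMulVec, add_mul]

lemma T1_diff_calc (p : Fin m → D) (C : Matrix (Fin m) (Fin n) D) (y y' : Fin n → D) :
    (vecMulVec p y + C) - (vecMulVec p y' + C) = vecMulVec p (y - y') := by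
  rw [← vv_sub_left]; abel

lemma T2_diff_calc (x x' : Fin m → D) (q : Fin n → D) (C : Matrix (Fin m) (Fin n) D) :
    (vecMulVec x q + C) - (vecMulVec x' q + C) = vecMulVec (x - x') q := by
  rw [← vv_sub_right]; abel

lemma diff_T2 {q : Fin n → D} {C B B' : Matrix (Fin m) (Fin n) D}
    (hB : B ∈ T2 q C) (hB' : B' ∈ T2 q C) : ∃ x, B - B' = vecMulVec x q := by
  obtain ⟨x, rfl⟩ := hB
  obtain ⟨x', rfl⟩ := hB'
  exact ⟨x - x', T2_diff_calc x x' q C⟩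

lemma diff_T1 {p : Fin m → D} {C B B' : Matrix (Fin m) (Fin n) D}
    (hB : B ∈ T1 p C) (hB' : B' ∈ T1 p C) : ∃ y, B - B' = vecMulVec p y := by
  obtain ⟨y, rfl⟩ := hB
  obtain ⟨y', rfl⟩ := hB'
  exact ⟨y - y', T1_diff_calc p C y y'⟩

lemma factor_right {p x : Fin m → D} (hp : p ≠ 0) {u q : Fin n → D}
    (h : vecMulVec p u = vecMulVec x q) : ∃ c : D, ∀ j, u j = c * q j := by
  obtain ⟨i₀, hi₀⟩ : ∃ i, p i ≠ 0 := by
    by_contra hh; push_neg at hh; exact hp (funext hh)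
  refine ⟨(p i₀)⁻¹ * x i₀, fun j => ?_⟩
  have := congrFun (congrFun h i₀) j
  simp only [vecMulVec, Matrix.of_apply] at this
  rw [mul_assoc]
  rw [← this, ← mul_assoc, inv_mul_cancel₀ hi₀, one_mul]

lemma factor_left {q y : Fin n → D} (hq : q ≠ 0) {u p : Fin m → D}
    (h : vecMulVec u q = vecMulVec p y) : ∃ c : D, ∀ i, u i = p i * c := by
  obtain ⟨j₀, hj₀⟩ : ∃ j, q j ≠ 0 := by
    by_contra hh; push_neg at hh; exact hq (funext hh)
  refine ⟨y j₀ * (q j₀)⁻¹, fun i => ?_⟩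
  have := congrFun (congrFun h i) j₀
  simp only [vecMulVec, Matrix.of_apply] at this
  rw [← mul_assoc, ← this, mul_assoc, mul_inv_cancel₀ hj₀, mul_one]

lemma not_both_row (hn : 2 ≤ n) {q : Fin n → D} {c c' : D}
    (h0 : ∀ j, (Pi.single (⟨0, by omega⟩ : Fin n) 1 : Fin n → D) j = c * q j)
    (h1 : ∀ j, (Pi.single (⟨1, by omega⟩ : Fin n) 1 : Fin n → D) j = c' * q j) : False := by
  have hne : (⟨0, by omega⟩ : Fin n) ≠ (⟨1, by omega⟩ : Fin n) := by
    intro h; exact absurd (congrArg Fin.val h) (by simp)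
  have e00 : (1 : D) = c * q ⟨0, by omega⟩ := by
    have := h0 ⟨0, by omega⟩; rwa [Pi.single_eq_same] at this
  have e10 : (0 : D) = c' * q ⟨0, by omega⟩ := by
    have := h1 ⟨0, by omega⟩; rwa [Pi.single_eq_of_ne hne] at this
  have e11 : (1 : D) = c' * q ⟨1, by omega⟩ := by
    have := h1 ⟨1, by omega⟩; rwa [Pi.single_eq_same] at this
  have hc' : c' ≠ 0 := by
    intro h; rw [h, zero_mul] at e11; exact one_ne_zero e11
  have hq0 : q ⟨0, by omega⟩ = 0 := by
    have := e10.symm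
    have h2 : c'⁻¹ * (c' * q ⟨0, by omega⟩) = c'⁻¹ * 0 := by rw [this]
    rwa [← mul_assoc, inv_mul_cancel₀ hc', one_mul, mul_zero] at h2
  rw [hq0, mul_zero] at e00
  exact one_ne_zero e00

lemma not_both_col (hm : 2 ≤ m) {p : Fin m → D} {c c' : D}
    (h0 : ∀ i, (Pi.single (⟨0, by omega⟩ : Fin m) 1 : Fin m → D) i = p i * c)
    (h1 : ∀ i, (Pi.single (⟨1, by omega⟩ : Fin m) 1 : Fin m → D) i = p i * c') : False := by
  have hne : (⟨0, by omega⟩ : Fin m) ≠ (⟨1, by omega⟩ : Fin m) := by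
    intro h; exact absurd (congrArg Fin.val h) (by simp)
  have e00 : (1 : D) = p ⟨0, by omega⟩ * c := by
    have := h0 ⟨0, by omega⟩; rwa [Pi.single_eq_same] at this
  have e10 : (0 : D) = p ⟨0, by omega⟩ * c' := by
    have := h1 ⟨0, by omega⟩; rwa [Pi.single_eq_of_ne hne] at this
  have e11 : (1 : D) = p ⟨1, by omega⟩ * c' := by
    have := h1 ⟨1, by omega⟩; rwa [Pi.single_eq_same] at this
  have hc' : c' ≠ 0 := by
    intro h; rw [h, mul_zero] at e11; exact one_ne_zero e11
  have hq0 : p ⟨0, by omega⟩ = 0 := by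
    have h2 : p ⟨0, by omega⟩ * c' * c'⁻¹ = 0 * c'⁻¹ := by rw [← e10]
    rwa [mul_assoc, mul_inv_cancel₀ hc', mul_one, zero_mul] at h2
  rw [hq0, zero_mul] at e00
  exact one_ne_zero e00

lemma single_mk_ne_zero {k : ℕ} (h : k < n) : (Pi.single (⟨k, h⟩ : Fin n) 1 : Fin n → D) ≠ 0 := by
  intro hz
  have := congrFun hz ⟨k, h⟩
  rw [Pi.single_eq_same] at this
  exact one_ne_zero this

lemma single_add_single_ne_zero (hn : 2 ≤ n) :
    ((Pi.single (⟨0, by omega⟩ : Fin n) 1 : Fin n → D)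
      + (Pi.single (⟨1, by omega⟩ : Fin n) 1 : Fin n → D)) ≠ 0 := by
  intro hz
  have hne : (⟨0, by omega⟩ : Fin n) ≠ (⟨1, by omega⟩ : Fin n) := by
    intro h; exact absurd (congrArg Fin.val h) (by simp)
  have := congrFun hz ⟨0, by omega⟩
  rw [Pi.add_apply, Pi.single_eq_same, Pi.single_eq_of_ne hne, add_zero] at this
  exact one_ne_zero this

end Frag6
end St14

/-- `A` belongs to a maximal set `M` iff `A` is adjacent to three
noncollinear points of `AG(M)` (Lemma `gdkj7ssb33`). -/
theorem stmt14 {D : Type*} [DivisionRing D] {m n : ℕ} (hm : 2 ≤ m) (hn : 2 ≤ n)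
    (M : Set (Matrix (Fin m) (Fin n) D)) (hM : IsMaxSet M)
    (A : Matrix (Fin m) (Fin n) D) :
    A ∈ M ↔ ∃ B₁ B₂ B₃ : Matrix (Fin m) (Fin n) D,
      B₁ ∈ M ∧ B₂ ∈ M ∧ B₃ ∈ M ∧
      (¬ ∃ ℓ, IsLine M ℓ ∧ B₁ ∈ ℓ ∧ B₂ ∈ ℓ ∧ B₃ ∈ ℓ) ∧
      rk (A - B₁) = 1 ∧ rk (A - B₂) = 1 ∧ rk (A - B₃) = 1 := by
  haveI : NeZero m := ⟨by omega⟩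
  haveI : NeZero n := ⟨by omega⟩
  constructor
  · -- forward direction
    intro hA
    rcases St14.classify hM with ⟨p, C, hp, hMT⟩ | ⟨q, C, hq, hMT⟩
    · -- M is type one : M = T1 p C
      have hA' : A ∈ St14.T1 p C := hMT ▸ hA
      obtain ⟨yA, rfl⟩ := hA'
      set δ0 : Fin n → D := Pi.single ⟨0, by omega⟩ 1 with hδ0
      set δ1 : Fin n → D := Pi.single ⟨1, by omega⟩ 1 with hδ1
      have hδ0ne : δ0 ≠ 0 := St14.single_mk_ne_zero _
      have hδ1ne : δ1 ≠ 0 := St14.single_mk_ne_zero _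
      have hδsne : δ0 + δ1 ≠ 0 := St14.single_add_single_ne_zero hn
      refine ⟨vecMulVec p (yA + δ0) + C, vecMulVec p (yA + δ1) + C,
        vecMulVec p (yA + (δ0 + δ1)) + C, ?_, ?_, ?_, ?_, ?_, ?_, ?_⟩
      · rw [hMT]; exact ⟨_, rfl⟩
      · rw [hMT]; exact ⟨_, rfl⟩
      · rw [hMT]; exact ⟨_, rfl⟩
      · rintro ⟨ℓ, ⟨N, hDT, -, rfl⟩, hb1, hb2, hb3⟩
        have key : ∀ (q' : Fin n → D) (C' : Matrix (Fin m) (Fin n) D),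
            (vecMulVec p (yA + δ0) + C) ∈ St14.T2 q' C' →
            (vecMulVec p (yA + δ1) + C) ∈ St14.T2 q' C' →
            (vecMulVec p (yA + (δ0 + δ1)) + C) ∈ St14.T2 q' C' → False := by
          intro q' C' m1 m2 m3
          obtain ⟨x, hx⟩ := St14.diff_T2 m3 m2
          obtain ⟨x', hx'⟩ := St14.diff_T2 m3 m1
          have c32 : (vecMulVec p (yA + (δ0 + δ1)) + C) - (vecMulVec p (yA + δ1) + C)
              = vecMulVec p δ0 := by
            rw [St14.T1_diff_calc, show yA + (δ0 + δ1) - (yA + δ1) = δ0 from by abel]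
          have c31 : (vecMulVec p (yA + (δ0 + δ1)) + C) - (vecMulVec p (yA + δ0) + C)
              = vecMulVec p δ1 := by
            rw [St14.T1_diff_calc, show yA + (δ0 + δ1) - (yA + δ0) = δ1 from by abel]
          have h32 : vecMulVec p δ0 = vecMulVec x q' := by rw [← c32, hx]
          have h31 : vecMulVec p δ1 = vecMulVec x' q' := by rw [← c31, hx']
          obtain ⟨c, hc⟩ := St14.factor_right hp h32
          obtain ⟨c', hc'⟩ := St14.factor_right hp h31
          exact St14.not_both_row hn hc hc'
        rcases hDT with ⟨hM1, hN2⟩ | ⟨hM2, hN1⟩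
        · obtain ⟨q', C', hq', hNT⟩ := St14.isTypeTwo_iff.1 hN2
          exact key q' C' (hNT ▸ hb1.2) (hNT ▸ hb2.2) (hNT ▸ hb3.2)
        · obtain ⟨q', C', hq', hNT⟩ := St14.isTypeTwo_iff.1 hM2
          exact key q' C' (hNT ▸ hb1.1) (hNT ▸ hb2.1) (hNT ▸ hb3.1)
      · rw [St14.T1_diff_calc, show yA - (yA + δ0) = -δ0 from by abel]
        exact St14.rk_vecMulVec hp (neg_ne_zero.2 hδ0ne)
      · rw [St14.T1_diff_calc, show yA - (yA + δ1) = -δ1 from by abel]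
        exact St14.rk_vecMulVec hp (neg_ne_zero.2 hδ1ne)
      · rw [St14.T1_diff_calc, show yA - (yA + (δ0 + δ1)) = -(δ0 + δ1) from by abel]
        exact St14.rk_vecMulVec hp (neg_ne_zero.2 hδsne)
    · -- M is type two : M = T2 q C
      have hA' : A ∈ St14.T2 q C := hMT ▸ hA
      obtain ⟨xA, rfl⟩ := hA'
      set ε0 : Fin m → D := Pi.single ⟨0, by omega⟩ 1 with hε0
      set ε1 : Fin m → D := Pi.single ⟨1, by omega⟩ 1 with hε1
      have hε0ne : ε0 ≠ 0 := St14.single_mk_ne_zero _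
      have hε1ne : ε1 ≠ 0 := St14.single_mk_ne_zero _
      have hεsne : ε0 + ε1 ≠ 0 := St14.single_add_single_ne_zero hm
      refine ⟨vecMulVec (xA + ε0) q + C, vecMulVec (xA + ε1) q + C,
        vecMulVec (xA + (ε0 + ε1)) q + C, ?_, ?_, ?_, ?_, ?_, ?_, ?_⟩
      · rw [hMT]; exact ⟨_, rfl⟩
      · rw [hMT]; exact ⟨_, rfl⟩
      · rw [hMT]; exact ⟨_, rfl⟩
      · rintro ⟨ℓ, ⟨N, hDT, -, rfl⟩, hb1, hb2, hb3⟩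
        have key : ∀ (p' : Fin m → D) (C' : Matrix (Fin m) (Fin n) D),
            (vecMulVec (xA + ε0) q + C) ∈ St14.T1 p' C' →
            (vecMulVec (xA + ε1) q + C) ∈ St14.T1 p' C' →
            (vecMulVec (xA + (ε0 + ε1)) q + C) ∈ St14.T1 p' C' → False := by
          intro p' C' m1 m2 m3
          obtain ⟨y, hy⟩ := St14.diff_T1 m3 m2
          obtain ⟨y', hy'⟩ := St14.diff_T1 m3 m1
          have c32 : (vecMulVec (xA + (ε0 + ε1)) q + C) - (vecMulVec (xA + ε1) q + C)
              = vecMulVec ε0 q := by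
            rw [St14.T2_diff_calc, show xA + (ε0 + ε1) - (xA + ε1) = ε0 from by abel]
          have c31 : (vecMulVec (xA + (ε0 + ε1)) q + C) - (vecMulVec (xA + ε0) q + C)
              = vecMulVec ε1 q := by
            rw [St14.T2_diff_calc, show xA + (ε0 + ε1) - (xA + ε0) = ε1 from by abel]
          have h32 : vecMulVec ε0 q = vecMulVec p' y := by rw [← c32, hy]
          have h31 : vecMulVec ε1 q = vecMulVec p' y' := by rw [← c31, hy']
          obtain ⟨c, hc⟩ := St14.factor_left hq h32
          obtain ⟨c', hc'⟩ := St14.factor_left hq h31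
          exact St14.not_both_col hm hc hc'
        rcases hDT with ⟨hM1, hN2⟩ | ⟨hM2, hN1⟩
        · obtain ⟨p', C', hp', hNT⟩ := St14.isTypeOne_iff.1 hM1
          exact key p' C' (hNT ▸ hb1.1) (hNT ▸ hb2.1) (hNT ▸ hb3.1)
        · obtain ⟨p', C', hp', hNT⟩ := St14.isTypeOne_iff.1 hN1
          exact key p' C' (hNT ▸ hb1.2) (hNT ▸ hb2.2) (hNT ▸ hb3.2)
      · rw [St14.T2_diff_calc, show xA - (xA + ε0) = -ε0 from by abel]
        exact St14.rk_vecMulVec (neg_ne_zero.2 hε0ne) hq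
      · rw [St14.T2_diff_calc, show xA - (xA + ε1) = -ε1 from by abel]
        exact St14.rk_vecMulVec (neg_ne_zero.2 hε1ne) hq
      · rw [St14.T2_diff_calc, show xA - (xA + (ε0 + ε1)) = -(ε0 + ε1) from by abel]
        exact St14.rk_vecMulVec (neg_ne_zero.2 hεsne) hq
  · -- reverse direction
    rintro ⟨B₁, B₂, B₃, hB1M, hB2M, hB3M, hnc, hr1, hr2, hr3⟩
    by_contra hA
    obtain ⟨a, b, ha, hb, hab⟩ := St14.rk_eq_one_decomp hr1
    rcases St14.classify hM with ⟨p, C, hp, hMT⟩ | ⟨q, C, hq, hMT⟩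
    · -- M type one
      obtain ⟨y₁, rfl⟩ : B₁ ∈ St14.T1 p C := hMT ▸ hB1M
      obtain ⟨y₂, rfl⟩ : B₂ ∈ St14.T1 p C := hMT ▸ hB2M
      obtain ⟨y₃, rfl⟩ : B₃ ∈ St14.T1 p C := hMT ▸ hB3M
      have hnotmul : ¬∃ c : D, ∀ i, a i = p i * c := by
        rintro ⟨c, hc⟩
        apply hA
        rw [hMT]
        refine ⟨(fun j => c * b j) + y₁, ?_⟩
        have hA1 : A = vecMulVec a b + (vecMulVec p y₁ + C) := by
          rw [← sub_eq_iff_eq_add.1 hab]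
        rw [hA1, show a = (fun i => p i * c) from funext hc, St14.vv_smul_assoc,
          ← add_assoc, St14.vv_add_left]
      have claim : ∀ y : Fin n → D, (vecMulVec p y + C ∈ M) →
          rk (A - (vecMulVec p y + C)) = 1 → ∃ e : D, ∀ j, (y - y₁) j = e * b j := by
        intro y hyM hyrk
        by_cases hyy : y = y₁
        · exact ⟨0, fun j => by rw [hyy]; simp⟩
        have hdiff : A - (vecMulVec p y + C) = vecMulVec a b - vecMulVec p (y - y₁) := by
          have e1 : A - (vecMulVec p y + C)
              = (A - (vecMulVec p y₁ + C)) - ((vecMulVec p y + C) - (vecMulVec p y₁ + C)) := by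
            abel
          rw [e1, hab, St14.T1_diff_calc]
        have hle : rk (vecMulVec a b - vecMulVec p (y - y₁)) ≤ 1 := by
          rw [← hdiff]; exact le_of_eq hyrk
        rcases St14.main_dep hle with hR | hL
        · exfalso
          obtain ⟨c, hc⟩ := St14.rdep_resolve hR ha
          have hc0 : c ≠ 0 := by
            intro h0; subst h0
            apply hp; funext i; rw [hc i, mul_zero]; rfl
          exact hnotmul ⟨c⁻¹, fun i => by
            rw [hc i, mul_assoc, mul_inv_cancel₀ hc0, mul_one]⟩
        · obtain ⟨e, he⟩ := St14.ldep_resolve hL hb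
          exact ⟨e, he⟩
      obtain ⟨e₂, he₂⟩ := claim y₂ hB2M hr2
      obtain ⟨e₃, he₃⟩ := claim y₃ hB3M hr3
      -- the line through B₁, B₂, B₃
      apply hnc
      refine ⟨M ∩ St14.T2 b (vecMulVec p y₁ + C), ⟨St14.T2 b (vecMulVec p y₁ + C),
        Or.inl ⟨St14.isTypeOne_iff.2 ⟨p, C, hp, hMT⟩,
          St14.isTypeTwo_iff.2 ⟨b, vecMulVec p y₁ + C, hb, rfl⟩⟩,
        ⟨vecMulVec p y₁ + C, hB1M, ⟨0, by rw [St14.vv_zero_left, zero_add]⟩⟩, rfl⟩,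
        ⟨hB1M, ⟨0, by rw [St14.vv_zero_left, zero_add]⟩⟩, ⟨hB2M, ?_⟩, ⟨hB3M, ?_⟩⟩
      · refine ⟨fun i => p i * e₂, sub_eq_iff_eq_add.1 ?_⟩
        rw [St14.T1_diff_calc, show y₂ - y₁ = (fun j => e₂ * b j) from funext he₂,
          St14.vv_smul_assoc]
      · refine ⟨fun i => p i * e₃, sub_eq_iff_eq_add.1 ?_⟩
        rw [St14.T1_diff_calc, show y₃ - y₁ = (fun j => e₃ * b j) from funext he₃,
          St14.vv_smul_assoc]
    · -- M type two
      obtain ⟨x₁, rfl⟩ : B₁ ∈ St14.T2 q C := hMT ▸ hB1M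
      obtain ⟨x₂, rfl⟩ : B₂ ∈ St14.T2 q C := hMT ▸ hB2M
      obtain ⟨x₃, rfl⟩ : B₃ ∈ St14.T2 q C := hMT ▸ hB3M
      have hnotmul : ¬∃ c : D, ∀ j, b j = c * q j := by
        rintro ⟨c, hc⟩
        apply hA
        rw [hMT]
        refine ⟨(fun i => a i * c) + x₁, ?_⟩
        have hA1 : A = vecMulVec a b + (vecMulVec x₁ q + C) := by
          rw [← sub_eq_iff_eq_add.1 hab]
        rw [hA1, show b = (fun j => c * q j) from funext hc, ← St14.vv_smul_assoc,
          ← add_assoc, St14.vv_add_right]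
      have claim : ∀ x : Fin m → D, (vecMulVec x q + C ∈ M) →
          rk (A - (vecMulVec x q + C)) = 1 → ∃ e : D, ∀ i, (x - x₁) i = a i * e := by
        intro x hxM hxrk
        by_cases hxx : x = x₁
        · exact ⟨0, fun i => by rw [hxx]; simp⟩
        have hdiff : A - (vecMulVec x q + C) = vecMulVec a b - vecMulVec (x - x₁) q := by
          have e1 : A - (vecMulVec x q + C)
              = (A - (vecMulVec x₁ q + C)) - ((vecMulVec x q + C) - (vecMulVec x₁ q + C)) := by
            abel
          rw [e1, hab, St14.T2_diff_calc]
        have hle : rk (vecMulVec a b - vecMulVec (x - x₁) q) ≤ 1 := by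
          rw [← hdiff]; exact le_of_eq hxrk
        rcases St14.main_dep hle with hR | hL
        · obtain ⟨e, he⟩ := St14.rdep_resolve hR ha
          exact ⟨e, he⟩
        · exfalso
          obtain ⟨c, hc⟩ := St14.ldep_resolve hL hb
          have hc0 : c ≠ 0 := by
            intro h0; subst h0
            apply hq; funext j; rw [hc j, zero_mul]; rfl
          exact hnotmul ⟨c⁻¹, fun j => by
            rw [hc j, ← mul_assoc, inv_mul_cancel₀ hc0, one_mul]⟩
      obtain ⟨e₂, he₂⟩ := claim x₂ hB2M hr2
      obtain ⟨e₃, he₃⟩ := claim x₃ hB3M hr3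
      apply hnc
      refine ⟨M ∩ St14.T1 a (vecMulVec x₁ q + C), ⟨St14.T1 a (vecMulVec x₁ q + C),
        Or.inr ⟨St14.isTypeTwo_iff.2 ⟨q, C, hq, hMT⟩,
          St14.isTypeOne_iff.2 ⟨a, vecMulVec x₁ q + C, ha, rfl⟩⟩,
        ⟨vecMulVec x₁ q + C, hB1M, ⟨0, by rw [St14.vv_zero_right, zero_add]⟩⟩, rfl⟩,
        ⟨hB1M, ⟨0, by rw [St14.vv_zero_right, zero_add]⟩⟩, ⟨hB2M, ?_⟩, ⟨hB3M, ?_⟩⟩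
      · refine ⟨fun j => e₂ * q j, sub_eq_iff_eq_add.1 ?_⟩
        rw [St14.T2_diff_calc, show x₂ - x₁ = (fun i => a i * e₂) from funext he₂,
          St14.vv_smul_assoc]
      · refine ⟨fun j => e₃ * q j, sub_eq_iff_eq_add.1 ?_⟩
        rw [St14.T2_diff_calc, show x₃ - x₁ = (fun i => a i * e₃) from funext he₃,
          St14.vv_smul_assoc]
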